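/- For all N ≥ 2, all k with 1 ≤ k ≤ N/2 and all p ∈ (1/2,1), the eigenfunction f_{N,k} satisfies f_{N,k}(∧) − f_{N,k}(∨) ≥ (1/8)·λ^{(k−N)/2}·N·k, where ∧ and ∨ are the maximal and minimal height functions. Consequently max(f_{N,k}(∧), −f_{N,k}(∨)) ≥ (1/16)·λ^{(k−N)/2}·N·k. -/

import Mathlib

open Filter
open scoped Classical BigOperators Topology

namespace Wasep

/-- Particle configurations on a segment of length `N`
(site `x` of the paper, `x ∈ {1,…,N}`, is index `x-1 : Fin N`). -/
abbrev Conf (N : ℕ) := Fin N → Bool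

/-- Number of particles of a configuration. -/
def numParticles {N : ℕ} (ξ : Conf N) : ℕ :=
  (Finset.univ.filter fun x => ξ x = true).card

/-- The left site of the bond `y` (the paper's site `y`, for `y ∈ {1,…,N-1}`). -/
def siteA {N : ℕ} (y : Fin (N - 1)) : Fin N := ⟨y.1, by have := y.isLt; omega⟩

/-- The right site of the bond `y` (the paper's site `y+1`, for `y ∈ {1,…,N-1}`). -/
def siteB {N : ℕ} (y : Fin (N - 1)) : Fin N := ⟨y.1 + 1, by have := y.isLt; omega⟩

/-- Jump rate of the bond `y` in configuration `ξ`: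
`q·1_{ξ(y)<ξ(y+1)} + p·1_{ξ(y)>ξ(y+1)}` with `q = 1-p`. -/
noncomputable def rate {N : ℕ} (p : ℝ) (ξ : Conf N) (y : Fin (N - 1)) : ℝ :=
  (if ξ (siteA y) = false ∧ ξ (siteB y) = true then 1 - p else 0) +
    (if ξ (siteA y) = true ∧ ξ (siteB y) = false then p else 0)

/-- The configuration `ξ^y`, with the contents of sites `y` and `y+1` swapped. -/
def swapBond {N : ℕ} (ξ : Conf N) (y : Fin (N - 1)) : Conf N :=
  ξ ∘ Equiv.swap (siteA y) (siteB y)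

/-- The ASEP generator acting on functions:
`(L f)(ξ) = Σ_{y=1}^{N-1} (q·1_{ξ(y)<ξ(y+1)} + p·1_{ξ(y)>ξ(y+1)})(f(ξ^y) − f(ξ))`. -/
noncomputable def gen (N : ℕ) (p : ℝ) (f : Conf N → ℝ) (ξ : Conf N) : ℝ :=
  ∑ y : Fin (N - 1), rate p ξ y * (f (swapBond ξ y) - f ξ)

/-- The ASEP generator, as a matrix:  `(L f)(ξ) = Σ_{ξ'} genM(ξ,ξ') f(ξ')`. -/
noncomputable def genM (N : ℕ) (p : ℝ) : Matrix (Conf N) (Conf N) ℝ := fun ξ ξ' =>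
  ∑ y : Fin (N - 1),
    rate p ξ y * ((if ξ' = swapBond ξ y then (1 : ℝ) else 0) - (if ξ' = ξ then (1 : ℝ) else 0))

/-- The semigroup `P_t = exp (t L)`; `Pt N p t ξ ξ'` is the transition
probability from `ξ` to `ξ'` in time `t`. -/
noncomputable def Pt (N : ℕ) (p t : ℝ) (ξ ξ' : Conf N) : ℝ :=
  (NormedSpace.exp (t • LinearMap.toContinuousLinearMap (Matrix.toLin' (genM N p))))
    (fun η => if η = ξ' then (1 : ℝ) else 0) ξ

/-- `λ = p / q`. -/
noncomputable def lam (p : ℝ) : ℝ := p / (1 - p)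

/-- The bias `b = p - q`. -/
def bias (p : ℝ) : ℝ := p - (1 - p)

/-- The increasing list of (1-based) particle positions `ξ_1 < ξ_2 < … < ξ_k`. -/
def particlePos {N : ℕ} (ξ : Conf N) : List ℕ :=
  ((Finset.univ.filter fun x => ξ x = true).sort (· ≤ ·)).map fun x => (x : ℕ) + 1

/-- `A(ξ) = Σ_{i=1}^k (N − k + i − ξ_i)`. -/
def Astat (N k : ℕ) {M : ℕ} (ξ : Conf M) : ℤ :=
  ∑ i ∈ Finset.range k, ((N : ℤ) - k + (i + 1) - ((particlePos ξ).getD i 0 : ℤ))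

/-- The partition function `Z_{N,k} = Σ_{ξ ∈ Ω⁰_{N,k}} λ^{−A(ξ)}`. -/
noncomputable def Zpart (N k : ℕ) (p : ℝ) : ℝ :=
  ∑ ξ ∈ Finset.univ.filter (fun ξ : Conf N => numParticles ξ = k), lam p ^ (-Astat N k ξ)

/-- The invariant measure `π_{N,k}(ξ) = λ^{−A(ξ)}/Z_{N,k}`,
extended by `0` outside of the `k`-particle sector. -/
noncomputable def statMeas (N k : ℕ) (p : ℝ) (ξ : Conf N) : ℝ :=
  if numParticles ξ = k then lam p ^ (-Astat N k ξ) / Zpart N k p else 0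

/-- Total variation distance `‖μ − ν‖_TV = sup_A (μ(A) − ν(A))` on a finite space. -/
noncomputable def tvDist {S : Type*} [Fintype S] (μ ν : S → ℝ) : ℝ :=
  ⨆ A : Finset S, (∑ x ∈ A, μ x - ∑ x ∈ A, ν x)

/-- `d^{N,k}(t) = max_{ξ ∈ Ω⁰_{N,k}} ‖P_t(ξ,·) − π_{N,k}‖_TV`. -/
noncomputable def distEq (N k : ℕ) (p t : ℝ) : ℝ :=
  ⨆ ξ : {ξ : Conf N // numParticles ξ = k},
    tvDist (fun ξ' => Pt N p t ξ.1 ξ') (statMeas N k p)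

/-- `T^{N,k}_mix(ε) = inf {t ≥ 0 : d^{N,k}(t) ≤ ε}`. -/
noncomputable def Tmix (N k : ℕ) (p ε : ℝ) : ℝ :=
  sInf {t : ℝ | 0 ≤ t ∧ distEq N k p t ≤ ε}

/-- The height function `h(ξ)(x) = Σ_{y=1}^x (2ξ(y) − 1)`, for `x ∈ {0,…,N}`. -/
def height {N : ℕ} (ξ : Conf N) (x : ℕ) : ℤ :=
  ∑ y ∈ Finset.univ.filter (fun y : Fin N => (y : ℕ) < x), (if ξ y then (1 : ℤ) else -1)

/-- Pointwise order on height functions. -/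
def heightLE {N : ℕ} (ξ ξ' : Conf N) : Prop := ∀ x ≤ N, height ξ x ≤ height ξ' x

/-- `ϱ = (√p − √q)²`. -/
noncomputable def rho (p : ℝ) : ℝ := (Real.sqrt p - Real.sqrt (1 - p)) ^ 2

/-- The spectral gap `gap_N = (√p − √q)² + 4√(pq)·sin²(π/(2N))`. -/
noncomputable def gapN (N : ℕ) (p : ℝ) : ℝ :=
  rho p + 4 * Real.sqrt (p * (1 - p)) * Real.sin (Real.pi / (2 * N)) ^ 2

/-- `a` solves the boundary value problem `√(pq)·Δa(x) = ϱ·a(x)` on `{1,…,N−1}`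
with `a(0) = 1` and `a(N) = λ^{(2k−N)/2}`, defining `a_{N,k}`. -/
def IsBVP (N k : ℕ) (p : ℝ) (a : ℕ → ℝ) : Prop :=
  a 0 = 1 ∧ a N = lam p ^ ((2 * (k : ℝ) - N) / 2) ∧
    ∀ x : ℕ, 1 ≤ x → x ≤ N - 1 →
      Real.sqrt (p * (1 - p)) * (a (x + 1) + a (x - 1) - 2 * a x) = rho p * a x

/-- `f^{(j)}_{N,k}(ζ) = Σ_{x=1}^{N-1} sin(jπx/N)·(λ^{ζ(x)/2} − a_{N,k}(x))/(λ−1)`,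
viewed as a function of the particle configuration via the height function. -/
noncomputable def eigenF (N : ℕ) (p : ℝ) (a : ℕ → ℝ) (j : ℕ) (ξ : Conf N) : ℝ :=
  ∑ x ∈ Finset.Icc 1 (N - 1),
    Real.sin ((j : ℝ) * Real.pi * x / N) *
      ((lam p ^ ((height ξ x : ℝ) / 2) - a x) / (lam p - 1))

/-- `f^{(0)}_{N,k}(ζ) = Σ_{x=1}^{N-1} (λ^{ζ(x)/2} − a_{N,k}(x))/(λ−1)`. -/
noncomputable def fZero (N : ℕ) (p : ℝ) (a : ℕ → ℝ) (ξ : Conf N) : ℝ :=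
  ∑ x ∈ Finset.Icc 1 (N - 1), (lam p ^ ((height ξ x : ℝ) / 2) - a x) / (lam p - 1)

/-- The maximal configuration `ξ^max` (particles on sites `1,…,k`);
its height function is `∧`. -/
def confMax (N k : ℕ) : Conf N := fun x => decide ((x : ℕ) < k)

/-- The minimal configuration `ξ^min` (particles on sites `N−k+1,…,N`);
its height function is `∨`. -/
def confMin (N k : ℕ) : Conf N := fun x => decide (N - k ≤ (x : ℕ))

/-- `π_{N,k}(ξ(x) = 1)` for the (0-based) site `x : Fin N`. -/
noncomputable def occProb (N k : ℕ) (p : ℝ) (x : Fin N) : ℝ :=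
  ∑ ξ ∈ Finset.univ.filter (fun ξ : Conf N => ξ x = true), statMeas N k p ξ

/-- `ℓ_N(ξ) = min {x ∈ {1,…,N} : ξ(x) = 1}`, the position of the leftmost particle. -/
noncomputable def leftPos {N : ℕ} (ξ : Conf N) : ℕ :=
  sInf {x | ∃ y : Fin N, ξ y = true ∧ x = (y : ℕ) + 1}

/-- `r_N(ξ) = max {x ∈ {1,…,N} : ξ(x) = 0}`, the position of the rightmost empty site. -/
noncomputable def rightEmpty {N : ℕ} (ξ : Conf N) : ℕ :=
  sSup {x | ∃ y : Fin N, ξ y = false ∧ x = (y : ℕ) + 1}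

/-- `Q₁(ξ)`: maximal length of a run of consecutive empty sites. -/
noncomputable def runEmpty {N : ℕ} (ξ : Conf N) : ℕ :=
  sSup {n | 1 ≤ n ∧ ∃ i, i + n ≤ N ∧
    ∀ y : Fin N, i ≤ (y : ℕ) → (y : ℕ) < i + n → ξ y = false}

/-- `Q₂(ξ)`: maximal length of a run of consecutive occupied sites. -/
noncomputable def runFull {N : ℕ} (ξ : Conf N) : ℕ :=
  sSup {n | 1 ≤ n ∧ ∃ i, i + n ≤ N ∧
    ∀ y : Fin N, i ≤ (y : ℕ) → (y : ℕ) < i + n → ξ y = true}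

/-- `Q(ξ) = max(Q₁(ξ), Q₂(ξ))`. -/
noncomputable def Qmax {N : ℕ} (ξ : Conf N) : ℕ := max (runEmpty ξ) (runFull ξ)

/-- `L_N(ζ) = max{x : ζ(x) = −x}` for a height function `ζ`. -/
noncomputable def LNh {N : ℕ} (ξ : Conf N) : ℕ :=
  sSup {x | x ≤ N ∧ height ξ x = -(x : ℤ)}

/-- `R_N(ζ) = min{x : ζ(x) = x − 2(N−k)}` for a height function `ζ`. -/
noncomputable def RNh (k : ℕ) {N : ℕ} (ξ : Conf N) : ℕ :=
  sInf {x | x ≤ N ∧ height ξ x = (x : ℤ) - 2 * ((N : ℤ) - k)}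

/-- `D_N(ζ) = max(|L_N(ζ) − (N−k)|, |R_N(ζ) − (N−k)|)`. -/
noncomputable def DNh (k : ℕ) {N : ℕ} (ξ : Conf N) : ℤ :=
  max |(LNh ξ : ℤ) - ((N : ℤ) - k)| |(RNh k ξ : ℤ) - ((N : ℤ) - k)|

/-- `H_ζ(x) = λ^{(N−k)/2}·(λ^{ζ(x)/2} − a_{N,k}(x))/(λ−1)`. -/
noncomputable def Hfun (N k : ℕ) (p : ℝ) (a : ℕ → ℝ) (ξ : Conf N) (x : ℕ) : ℝ :=
  lam p ^ (((N : ℝ) - k) / 2) * ((lam p ^ ((height ξ x : ℝ) / 2) - a x) / (lam p - 1))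

/-- Variance of `f` under the (probability vector) `μ`. -/
noncomputable def varOf {S : Type*} [Fintype S] (μ f : S → ℝ) : ℝ :=
  (∑ x, μ x * f x ^ 2) - (∑ x, μ x * f x) ^ 2

/-- Total variation distance between the pushforwards of `μ` and `ν` by `g`. -/
noncomputable def tvPush {S : Type*} [Fintype S] (μ ν : S → ℝ) (g : S → ℕ) : ℝ :=
  ⨆ A : Set ℕ,
    ((∑ x ∈ Finset.univ.filter (fun x => g x ∈ A), μ x) -
      ∑ x ∈ Finset.univ.filter (fun x => g x ∈ A), ν x)

/-- The scaling limit `ℓ_α(t)` of the (rescaled) position of the leftmost particle. -/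
noncomputable def ellAlpha (α t : ℝ) : ℝ :=
  if t ≤ α then 0
  else if (Real.sqrt α + Real.sqrt (1 - α)) ^ 2 ≤ t then 1 - α
  else (Real.sqrt t - Real.sqrt α) ^ 2

/-- The scaling limit `r_α(t)` of the (rescaled) position of the rightmost empty site. -/
noncomputable def rAlpha (α t : ℝ) : ℝ :=
  if t ≤ 1 - α then 1
  else if (Real.sqrt α + Real.sqrt (1 - α)) ^ 2 ≤ t then 1 - α
  else 1 - (Real.sqrt t - Real.sqrt (1 - α)) ^ 2

end Wasep

namespace Wasep

private lemma height_zero' {N : ℕ} (ξ : Conf N) : height ξ 0 = 0 := by simp [height]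

private lemma height_succ' {N : ℕ} (ξ : Conf N) (x : ℕ) (hx : x < N) :
    height ξ (x + 1) = height ξ x + (if ξ ⟨x, hx⟩ then 1 else -1) := by
  unfold height
  have h : (Finset.univ.filter fun y : Fin N => (y : ℕ) < x + 1)
      = insert ⟨x, hx⟩ (Finset.univ.filter fun y : Fin N => (y : ℕ) < x) := by
    ext y
    simp only [Finset.mem_filter, Finset.mem_univ, true_and, Finset.mem_insert, Fin.ext_iff]
    omega
  rw [h, Finset.sum_insert (by simp)]
  ring

private lemma height_confMax' (N k : ℕ) :
    ∀ x ≤ N, height (confMax N k) x = 2 * ((min x k : ℕ) : ℤ) - x := by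
  intro x
  induction x with
  | zero => intro _; rw [height_zero']; simp
  | succ n ih =>
    intro hn
    rw [height_succ' _ n (by omega), ih (by omega)]
    simp only [confMax, decide_eq_true_eq]
    by_cases h : n < k <;> simp only [h, if_true, if_false] <;> push_cast <;> omega

private lemma height_confMin' (N k : ℕ) :
    ∀ x ≤ N, height (confMin N k) x = x - 2 * ((min x (N - k) : ℕ) : ℤ) := by
  intro x
  induction x with
  | zero => intro _; rw [height_zero']; simp
  | succ n ih =>
    intro hn
    rw [height_succ' _ n (by omega), ih (by omega)]
    simp only [confMin, decide_eq_true_eq]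
    by_cases h : N - k ≤ n <;> simp only [h, if_true, if_false] <;> push_cast <;> omega

private lemma key_pow' (L : ℝ) (hL : 1 < L) (A B e : ℝ) (m : ℕ)
    (hAB : A - B = 2 * m) (hBe : e ≤ B) :
    L ^ (e / 2) * m * (L - 1) ≤ L ^ (A / 2) - L ^ (B / 2) := by
  have h0 : (0 : ℝ) < L := by linarith
  have h1 : L ^ (A / 2) = L ^ (B / 2) * L ^ (m : ℕ) := by
    rw [← Real.rpow_natCast L m, ← Real.rpow_add h0]
    congr 1
    linarith
  have h2 : (m : ℝ) * (L - 1) + 1 ≤ L ^ (m : ℕ) := by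
    have := one_add_mul_le_pow (a := L - 1) (by linarith) m
    calc (m : ℝ) * (L - 1) + 1 = 1 + m * (L - 1) := by ring
    _ ≤ (1 + (L - 1)) ^ m := this
    _ = L ^ m := by ring_nf
  have h3 : L ^ (e / 2) ≤ L ^ (B / 2) := by
    apply Real.rpow_le_rpow_left_iff hL |>.mpr
    linarith
  have h5 : (0:ℝ) ≤ (m : ℝ) * (L - 1) := mul_nonneg (Nat.cast_nonneg m) (by linarith)
  calc L ^ (e / 2) * m * (L - 1) = L ^ (e / 2) * ((m : ℝ) * (L - 1)) := by ring
  _ ≤ L ^ (B / 2) * ((m : ℝ) * (L - 1)) := mul_le_mul_of_nonneg_right h3 h5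
  _ ≤ L ^ (B / 2) * (L ^ (m:ℕ) - 1) := by
      apply mul_le_mul_of_nonneg_left (by linarith) (Real.rpow_pos_of_pos h0 _).le
  _ = L ^ (A / 2) - L ^ (B / 2) := by rw [h1]; ring

private lemma sin_lb' (N x c : ℕ) (hN : 0 < N) (hc : c ≤ x) (hx : x ≤ N - c) (hcx : 2 * c ≤ N) :
    2 * c / N ≤ Real.sin (Real.pi * x / N) := by
  have hNR : (0:ℝ) < N := by exact_mod_cast hN
  rcases le_or_gt (2 * x) N with h | h
  · have h1 : (0:ℝ) ≤ Real.pi * x / N := by positivity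
    have h2 : Real.pi * x / N ≤ Real.pi / 2 := by
      rw [div_le_div_iff₀ hNR (by norm_num)]
      have : (2:ℝ) * x ≤ N := by exact_mod_cast h
      nlinarith [Real.pi_pos]
    have := Real.mul_le_sin h1 h2
    calc (2:ℝ) * c / N ≤ 2 * x / N := by
          have : (c:ℝ) ≤ x := by exact_mod_cast hc
          gcongr
    _ = 2 / Real.pi * (Real.pi * x / N) := by
          field_simp
    _ ≤ _ := this
  · have hxN : x ≤ N := by omega
    have hcast : ((N - x : ℕ) : ℝ) = (N : ℝ) - x := by
      push_cast [hxN]; ring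
    have harg : Real.pi * x / N = Real.pi - Real.pi * (N - x : ℕ) / N := by
      rw [hcast]; field_simp; ring
    rw [harg, Real.sin_pi_sub]
    have h1 : (0:ℝ) ≤ Real.pi * (N - x : ℕ) / N := by positivity
    have h2 : Real.pi * (N - x : ℕ) / N ≤ Real.pi / 2 := by
      rw [div_le_div_iff₀ hNR (by norm_num)]
      have : (2:ℝ) * ((N - x : ℕ):ℝ) ≤ N := by
        rw [hcast]
        have : (N:ℝ) < 2 * x := by exact_mod_cast h
        linarith
      nlinarith [Real.pi_pos]
    have := Real.mul_le_sin h1 h2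
    calc (2:ℝ) * c / N ≤ 2 * (N - x : ℕ) / N := by
          have : (c:ℝ) ≤ ((N - x : ℕ):ℝ) := by
            have : c ≤ N - x := by omega
            exact_mod_cast this
          gcongr
    _ = 2 / Real.pi * (Real.pi * (N - x:ℕ) / N) := by
          field_simp
    _ ≤ _ := this

private lemma sum_sin_m' (N k : ℕ) (hN : 2 ≤ N) (hk1 : 1 ≤ k) (hk2 : 2 * k ≤ N) :
    1 / 8 * N * k ≤ ∑ x ∈ Finset.Icc 1 (N - 1),
      Real.sin (Real.pi * x / N) * ((min x (min k (N - x)) : ℕ) : ℝ) := by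
  set c := (N + 3) / 4 with hc
  have hc1 : 1 ≤ c := by omega
  have hc2 : 2 * c ≤ N := by omega
  have hc4 : N ≤ 4 * c ∧ 4 * c ≤ N + 3 := by omega
  have hNR : (0:ℝ) < N := by positivity
  have hsub : Finset.Icc c (N - c) ⊆ Finset.Icc 1 (N - 1) := by
    intro x hx
    simp only [Finset.mem_Icc] at *
    omega
  have hnonneg : ∀ x ∈ Finset.Icc 1 (N - 1), x ∉ Finset.Icc c (N - c) →
      0 ≤ Real.sin (Real.pi * x / N) * ((min x (min k (N - x)) : ℕ) : ℝ) := by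
    intro x hx _
    simp only [Finset.mem_Icc] at hx
    apply mul_nonneg _ (Nat.cast_nonneg _)
    apply Real.sin_nonneg_of_nonneg_of_le_pi (by positivity)
    rw [div_le_iff₀ hNR]
    have : (x:ℝ) ≤ N := by exact_mod_cast hx.2.trans (by omega)
    nlinarith [Real.pi_pos]
  have hterm : ∀ x ∈ Finset.Icc c (N - c),
      2 * c / N * ((k:ℝ) / 2) ≤ Real.sin (Real.pi * x / N) * ((min x (min k (N - x)) : ℕ) : ℝ) := by
    intro x hx
    simp only [Finset.mem_Icc] at hx
    have hs := sin_lb' N x c (by omega) hx.1 hx.2 hc2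
    have hm : (k:ℝ) / 2 ≤ ((min x (min k (N - x)) : ℕ) : ℝ) := by
      have h0 : k ≤ 2 * min x (min k (N - x)) := by omega
      have h2 : (k:ℝ) ≤ 2 * ((min x (min k (N - x)) : ℕ) : ℝ) := by exact_mod_cast h0
      linarith
    have h1 : (0:ℝ) ≤ 2 * c / N := by positivity
    have h2 : (0:ℝ) ≤ (k:ℝ) / 2 := by positivity
    calc 2 * (c:ℝ) / N * ((k:ℝ)/2) ≤ Real.sin (Real.pi * x / N) * ((k:ℝ)/2) :=
          mul_le_mul_of_nonneg_right hs h2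
    _ ≤ _ := mul_le_mul_of_nonneg_left hm (le_trans h1 hs)
  have hcard : (Finset.Icc c (N - c)).card = N + 1 - 2 * c := by
    rw [Nat.card_Icc]; omega
  have hsum1 := Finset.card_nsmul_le_sum _ _ _ hterm
  rw [hcard, nsmul_eq_mul] at hsum1
  have hfin : 1 / 8 * (N:ℝ) * k ≤ (N + 1 - 2 * c : ℕ) * (2 * c / N * ((k:ℝ)/2)) := by
    have hnat : (N:ℤ)^2 ≤ 8 * ((N + 1 - 2*c : ℕ) * c) := by
      have hd : ((N + 1 - 2*c : ℕ) : ℤ) = (N:ℤ) + 1 - 2*c := by omega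
      rw [hd]
      nlinarith [mul_nonneg (by omega : (0:ℤ) ≤ 4*(c:ℤ) - N) (by omega : (0:ℤ) ≤ (N:ℤ) + 3 - 4*c)]
    have hnatR : (N:ℝ)^2 ≤ 8 * ((N + 1 - 2*c : ℕ) * c) := by exact_mod_cast hnat
    have hkR : (1:ℝ) ≤ k := by exact_mod_cast hk1
    rw [← sub_nonneg]
    have heq : ((N + 1 - 2 * c:ℕ):ℝ) * (2 * c / N * ((k:ℝ)/2)) - 1/8 * N * k
        = (8 * (((N + 1 - 2*c : ℕ):ℝ) * c) - (N:ℝ)^2) * k / (8 * N) := by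
      field_simp
    rw [heq]
    apply div_nonneg _ (by positivity)
    apply mul_nonneg (by push_cast at hnatR ⊢; linarith) (by positivity)
  calc (1:ℝ)/8 * N * k ≤ _ := hfin
  _ ≤ ∑ x ∈ Finset.Icc c (N - c),
        Real.sin (Real.pi * x / N) * ((min x (min k (N - x)) : ℕ) : ℝ) := hsum1
  _ ≤ _ := Finset.sum_le_sum_of_subset_of_nonneg hsub hnonneg


/-- First-moment lower bound for the eigenfunction `f_{N,k}` at the extremal
configurations: `f(∧) − f(∨) ≥ (1/8)·λ^{(k−N)/2}·N·k`, hence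
`max(f(∧), −f(∨)) ≥ (1/16)·λ^{(k−N)/2}·N·k`. -/
theorem eigenfunction_extremal_bound
    (N k : ℕ) (p : ℝ) (hN : 2 ≤ N) (hk : 1 ≤ k ∧ 2 * k ≤ N)
    (hp : p ∈ Set.Ioo (1 / 2 : ℝ) 1)
    (a : ℕ → ℝ) (ha : IsBVP N k p a) :
    1 / 8 * lam p ^ (((k : ℝ) - N) / 2) * N * k ≤
        eigenF N p a 1 (confMax N k) - eigenF N p a 1 (confMin N k) ∧
      1 / 16 * lam p ^ (((k : ℝ) - N) / 2) * N * k ≤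
        max (eigenF N p a 1 (confMax N k)) (-eigenF N p a 1 (confMin N k)) := by
  obtain ⟨hk1, hk2⟩ := hk
  obtain ⟨hp1, hp2⟩ := hp
  have hq : (0:ℝ) < 1 - p := by linarith
  have hlam : 1 < lam p := by
    rw [lam, lt_div_iff₀ hq]; linarith
  have hlam0 : (0:ℝ) < lam p := by linarith
  have hL1 : (0:ℝ) < lam p - 1 := by linarith
  have key : 1/8 * lam p ^ (((k:ℝ) - N)/2) * N * k ≤
      eigenF N p a 1 (confMax N k) - eigenF N p a 1 (confMin N k) := by
    rw [eigenF, eigenF, ← Finset.sum_sub_distrib]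
    have hstep : ∀ x ∈ Finset.Icc 1 (N-1),
        lam p ^ (((k:ℝ) - N)/2) *
            (Real.sin (Real.pi * x / N) * ((min x (min k (N-x)) : ℕ):ℝ))
        ≤ Real.sin ((1:ℕ) * Real.pi * x / N) *
              ((lam p ^ ((height (confMax N k) x : ℝ)/2) - a x)/(lam p - 1))
           - Real.sin ((1:ℕ) * Real.pi * x / N) *
              ((lam p ^ ((height (confMin N k) x : ℝ)/2) - a x)/(lam p - 1)) := by
      intro x hx
      simp only [Finset.mem_Icc] at hx
      have hxN : x ≤ N := by omega
      rw [height_confMax' N k x hxN, height_confMin' N k x hxN]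
      have hABz : (2 * ((min x k : ℕ) : ℤ) - x) - ((x:ℤ) - 2 * ((min x (N - k) : ℕ) : ℤ))
          = 2 * ((min x (min k (N - x)) : ℕ) : ℤ) := by omega
      have hAB : ((2 * ((min x k : ℕ) : ℤ) - x : ℤ) : ℝ)
          - (((x:ℤ) - 2 * ((min x (N - k) : ℕ) : ℤ) : ℤ) : ℝ)
          = 2 * ((min x (min k (N - x)) : ℕ) : ℝ) := by exact_mod_cast hABz
      have hBez : (k:ℤ) - N ≤ (x:ℤ) - 2 * ((min x (N - k) : ℕ) : ℤ) := by omega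
      have hBe : (k:ℝ) - N ≤ (((x:ℤ) - 2 * ((min x (N - k) : ℕ) : ℤ) : ℤ) : ℝ) := by
        exact_mod_cast hBez
      have hkey := key_pow' (lam p) hlam
        (((2 * ((min x k : ℕ) : ℤ) - x : ℤ) : ℝ))
        ((((x:ℤ) - 2 * ((min x (N - k) : ℕ) : ℤ) : ℤ) : ℝ))
        ((k:ℝ) - N) (min x (min k (N - x))) hAB hBe
      have hdiv : lam p ^ (((k:ℝ) - N)/2) * ((min x (min k (N - x)) : ℕ):ℝ) ≤
          (lam p ^ (((2 * ((min x k : ℕ) : ℤ) - x : ℤ) : ℝ)/2)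
            - lam p ^ ((((x:ℤ) - 2 * ((min x (N - k) : ℕ) : ℤ) : ℤ) : ℝ)/2)) / (lam p - 1) := by
        rw [le_div_iff₀ hL1]
        linarith
      have hsin : (0:ℝ) ≤ Real.sin (Real.pi * x / N) := by
        have hNR : (0:ℝ) < N := by positivity
        apply Real.sin_nonneg_of_nonneg_of_le_pi (by positivity)
        rw [div_le_iff₀ hNR]
        have : (x:ℝ) ≤ N := by exact_mod_cast hxN
        nlinarith [Real.pi_pos]
      simp only [Nat.cast_one, one_mul]
      have hfinal : Real.sin (Real.pi * x / N) *
              ((lam p ^ ((((2 * ((min x k : ℕ) : ℤ) - x : ℤ)):ℝ)/2) - a x)/(lam p - 1))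
           - Real.sin (Real.pi * x / N) *
              ((lam p ^ (((((x:ℤ) - 2 * ((min x (N - k) : ℕ) : ℤ) : ℤ)):ℝ)/2) - a x)/(lam p - 1))
          = Real.sin (Real.pi * x / N) *
              ((lam p ^ ((((2 * ((min x k : ℕ) : ℤ) - x : ℤ)):ℝ)/2)
                - lam p ^ (((((x:ℤ) - 2 * ((min x (N - k) : ℕ) : ℤ) : ℤ)):ℝ)/2)) / (lam p - 1)) := by
        field_simp
        ring
      rw [hfinal]
      calc lam p ^ (((k:ℝ) - N)/2) *
            (Real.sin (Real.pi * x / N) * ((min x (min k (N-x)) : ℕ):ℝ))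
          = Real.sin (Real.pi * x / N) *
            (lam p ^ (((k:ℝ) - N)/2) * ((min x (min k (N-x)) : ℕ):ℝ)) := by ring
        _ ≤ _ := mul_le_mul_of_nonneg_left hdiv hsin
    have hsum := Finset.sum_le_sum hstep
    have hpow : (0:ℝ) < lam p ^ (((k:ℝ) - N)/2) := Real.rpow_pos_of_pos hlam0 _
    calc 1/8 * lam p ^ (((k:ℝ) - N)/2) * N * k
        = lam p ^ (((k:ℝ) - N)/2) * (1/8 * N * k) := by ring
      _ ≤ lam p ^ (((k:ℝ) - N)/2) * (∑ x ∈ Finset.Icc 1 (N-1),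
            Real.sin (Real.pi * x / N) * ((min x (min k (N-x)) : ℕ):ℝ)) :=
          mul_le_mul_of_nonneg_left (sum_sin_m' N k hN hk1 hk2) hpow.le
      _ = ∑ x ∈ Finset.Icc 1 (N-1), lam p ^ (((k:ℝ) - N)/2) *
            (Real.sin (Real.pi * x / N) * ((min x (min k (N-x)) : ℕ):ℝ)) := Finset.mul_sum _ _ _
      _ ≤ _ := hsum
  refine ⟨key, ?_⟩
  have ha := le_max_left (eigenF N p a 1 (confMax N k)) (-eigenF N p a 1 (confMin N k))
  have hb := le_max_right (eigenF N p a 1 (confMax N k)) (-eigenF N p a 1 (confMin N k))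
  linarith


end Wasep
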